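/- Let δ < b be real numbers and let y : [δ,b] → ℝ be continuously differentiable with y'(δ) > 0, and suppose that for every u ∈ (δ,b) with y'(u) = 0 the second derivative y''(u) exists and satisfies y''(u) > 0 (i.e. every interior critical point of y would be a strict local minimum of y). Then y'(u) > 0 for all u ∈ [δ,b). -/
import Mathlib


open Set Topology Filter

/-- The ODE argument from Lemma 4.1: if `y ∈ C¹([δ,b])` with `y'(δ) > 0` and
every interior critical point of `y` would be a strict local minimum (at each
`u ∈ (δ,b)` with `y'(u) = 0` the second derivative exists and is positive),
then `y' > 0` on all of `[δ,b)`. -/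
theorem lem_no_interior_min (δ b : ℝ) (hδb : δ < b) (y y' : ℝ → ℝ)
    (hderiv : ∀ u ∈ Set.Icc δ b, HasDerivWithinAt y (y' u) (Set.Icc δ b) u)
    (hcont : ContinuousOn y' (Set.Icc δ b))
    (hpos : 0 < y' δ)
    (hcrit : ∀ u ∈ Set.Ioo δ b, y' u = 0 →
      ∃ c : ℝ, HasDerivAt y' c u ∧ 0 < c) :
    ∀ u ∈ Set.Ico δ b, 0 < y' u := by
  by_contra h
  push_neg at h
  obtain ⟨u₁, hu₁, hle⟩ := h
  have hδu₁ : δ ≤ u₁ := hu₁.1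
  have hu₁b : u₁ < b := hu₁.2
  set T := Icc δ u₁ ∩ y' ⁻¹' Iic 0 with hT
  have hsub : Icc δ u₁ ⊆ Icc δ b := Icc_subset_Icc le_rfl hu₁b.le
  have hTclosed : IsClosed T :=
    (hcont.mono hsub).preimage_isClosed_of_isClosed isClosed_Icc isClosed_Iic
  have hTne : T.Nonempty := ⟨u₁, ⟨hδu₁, le_rfl⟩, hle⟩
  have hTbdd : BddBelow T := ⟨δ, fun x hx => hx.1.1⟩
  set z := sInf T with hz
  have hzT : z ∈ T := hTclosed.csInf_mem hTne hTbdd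
  have hzu₁ : z ≤ u₁ := hzT.1.2
  have hδz : δ ≤ z := hzT.1.1
  have hz0 : y' z ≤ 0 := hzT.2
  have hδz' : δ < z := lt_of_le_of_ne hδz
    (fun hEq => absurd hz0 (hEq ▸ not_le.mpr hpos))
  have hzb : z < b := lt_of_le_of_lt hzu₁ hu₁b
  -- y' > 0 strictly to the left of z (within [δ, z))
  have hleft : ∀ t ∈ Ico δ z, 0 < y' t := by
    intro t ht
    by_contra hc
    push_neg at hc
    have : t ∈ T := ⟨⟨ht.1, ht.2.le.trans hzu₁⟩, hc⟩
    exact absurd (csInf_le hTbdd this) (not_le.mpr ht.2)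
  have hIoosub : Ioo δ z ⊆ Icc δ b := fun t ht => ⟨ht.1.le, ht.2.le.trans hzb.le⟩
  have hne : (𝓝[Ioo δ z] z).NeBot := by
    rw [← mem_closure_iff_nhdsWithin_neBot, closure_Ioo hδz'.ne]
    exact ⟨hδz, le_rfl⟩
  have hzIcc : z ∈ Icc δ b := ⟨hδz, hzb.le⟩
  -- y' z = 0 by continuity from the left
  have htend : Filter.Tendsto y' (𝓝[Ioo δ z] z) (𝓝 (y' z)) :=
    (hcont.continuousWithinAt hzIcc).mono_left (nhdsWithin_mono z hIoosub)
  have hz0' : 0 ≤ y' z :=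
    ge_of_tendsto htend (Filter.eventually_of_mem self_mem_nhdsWithin
      fun t ht => (hleft t ⟨ht.1.le, ht.2⟩).le)
  have hzcrit : y' z = 0 := le_antisymm hz0 hz0'
  obtain ⟨c, hc, hcpos⟩ := hcrit z ⟨hδz', hzb⟩ hzcrit
  -- slope of y' at z from the left is negative
  have hslope : Filter.Tendsto (slope y' z) (𝓝[≠] z) (𝓝 c) :=
    hasDerivAt_iff_tendsto_slope.mp hc
  have hslope' : Filter.Tendsto (slope y' z) (𝓝[Ioo δ z] z) (𝓝 c) :=
    hslope.mono_left (nhdsWithin_mono z fun t ht => ne_of_lt ht.2)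
  have hcle : c ≤ 0 := by
    refine le_of_tendsto hslope' (Filter.eventually_of_mem self_mem_nhdsWithin
      fun t ht => ?_)
    have h1 : 0 < y' t := hleft t ⟨ht.1.le, ht.2⟩
    have h2 : t - z < 0 := sub_neg.mpr ht.2
    have : slope y' z t = y' t / (t - z) := by
      rw [slope_def_field, div_eq_div_iff (sub_ne_zero.mpr (ne_of_lt ht.2))
        (sub_ne_zero.mpr (ne_of_lt ht.2))]
      rw [hzcrit]; ring
    rw [this]
    exact (div_neg_of_pos_of_neg h1 h2).le
  exact absurd hcpos (not_lt.mpr hcle)
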